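/- Let d ≥ 1 be an integer and let a ≥ b > 0 with a + b > d. There is a constant C = C(a,b,d) < ∞, independent of L, such that for every L ≥ 1 and every x ∈ ℤ^d: if a > d then ∑_{y∈ℤ^d} ⟨x−y⟩_L^{−a} ⟨y⟩_L^{−b} ≤ C·L^{d−a}·⟨x⟩_L^{−b}, and if a < d then ∑_{y∈ℤ^d} ⟨x−y⟩_L^{−a} ⟨y⟩_L^{−b} ≤ C·⟨x⟩_L^{d−a−b}. -/

import Mathlib

open scoped BigOperators ENNReal

noncomputable section

namespace LongRange

abbrev V (d : ℕ) : Type := Fin d → ℤ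

variable {d : ℕ}

def nrm (x : V d) : ℝ := Real.sqrt (∑ i, ((x i : ℝ)) ^ 2)

def bkt (L : ℝ) (x : V d) : ℝ := max (nrm x) L

/-! ### Basic facts -/

def emb (x : V d) : EuclideanSpace ℝ (Fin d) := WithLp.toLp 2 (fun i => (x i : ℝ))

lemma nrm_eq_norm (x : V d) : nrm x = ‖emb x‖ := by
  rw [EuclideanSpace.norm_eq, nrm]
  congr 1; apply Finset.sum_congr rfl
  intro i _; rw [show ‖emb x i‖ = |(x i:ℝ)| from rfl, sq_abs]

lemma nrm_nonneg (x : V d) : 0 ≤ nrm x := Real.sqrt_nonneg _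

lemma nrm_triangle (x y : V d) : nrm x ≤ nrm (x - y) + nrm y := by
  rw [nrm_eq_norm, nrm_eq_norm, nrm_eq_norm]
  have : emb x = emb (x - y) + emb y := by
    ext i
    show ((x i : ℤ):ℝ) = (((x-y) i : ℤ):ℝ) + ((y i:ℤ):ℝ)
    push_cast [Pi.sub_apply]; ring
  rw [this]; exact norm_add_le _ _

lemma abs_coord_le_nrm (x : V d) (i : Fin d) : |(x i : ℝ)| ≤ nrm x := by
  rw [nrm, ← Real.sqrt_sq_eq_abs]
  apply Real.sqrt_le_sqrt
  exact Finset.single_le_sum (f := fun j => ((x j:ℝ))^2) (fun j _ => sq_nonneg _)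
    (Finset.mem_univ i)

lemma le_bkt (L : ℝ) (x : V d) : L ≤ bkt L x := le_max_right _ _

lemma nrm_le_bkt (L : ℝ) (x : V d) : nrm x ≤ bkt L x := le_max_left _ _

lemma bkt_pos {L : ℝ} (hL : 1 ≤ L) (x : V d) : 0 < bkt L x :=
  lt_of_lt_of_le one_pos (le_trans hL (le_bkt L x))

lemma bkt_triangle (L : ℝ) (x y : V d) : bkt L x ≤ bkt L (x - y) + bkt L y := by
  rw [bkt, max_le_iff]
  constructor
  · exact le_trans (nrm_triangle x y) (add_le_add (nrm_le_bkt L _) (nrm_le_bkt L _))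
  · calc L ≤ bkt L (x - y) := le_bkt L _
      _ ≤ _ := le_add_of_nonneg_right (le_trans (nrm_nonneg y) (nrm_le_bkt L y))

/-! ### Counting lattice points -/

def box (d n : ℕ) : Finset (V d) := Finset.Icc (fun _ => -(n:ℤ)) (fun _ => (n:ℤ))

lemma card_box (n : ℕ) : (box d n).card = (2*n+1)^d := by
  rw [box, Pi.card_Icc]
  simp [Int.card_Icc]
  rw [show ((n:ℤ) + 1 + (n:ℤ)) = ((2*n+1 : ℕ) : ℤ) by push_cast; ring, Int.toNat_natCast]

lemma mem_box_of_nrm_le {x : V d} {n : ℕ} (h : nrm x ≤ n) : x ∈ box d n := by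
  rw [box, Finset.mem_Icc]
  have h' : ∀ i, |(x i : ℝ)| ≤ n := fun i => le_trans (abs_coord_le_nrm x i) h
  refine ⟨fun i => ?_, fun i => ?_⟩
  · exact_mod_cast (abs_le.1 (h' i)).1
  · exact_mod_cast (abs_le.1 (h' i)).2

/-- Bound for a sum over a set contained in a Euclidean ball of radius `r ≥ 1`. -/
lemma tsum_indicator_le_of_ball (A : Set (V d)) (f : V d → ℝ≥0∞) {c r : ℝ}
    (hc : 0 ≤ c) (hr : 1 ≤ r)
    (hfc : ∀ y ∈ A, f y ≤ ENNReal.ofReal c) (hA : ∀ y ∈ A, nrm y ≤ r) :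
    ∑' y, A.indicator f y ≤ ENNReal.ofReal ((5*r)^d * c) := by
  set n : ℕ := ⌈r⌉₊ with hn
  have hsub : ∀ y ∈ A, y ∈ box d n := by
    intro y hy
    exact mem_box_of_nrm_le (le_trans (hA y hy) (Nat.le_ceil r))
  have hpt : ∀ y, A.indicator f y ≤ (↑(box d n) : Set (V d)).indicator
      (fun _ => ENNReal.ofReal c) y := by
    intro y
    by_cases hy : y ∈ A
    · rw [Set.indicator_of_mem hy, Set.indicator_of_mem (by exact_mod_cast hsub y hy)]
      exact hfc y hy
    · rw [Set.indicator_of_notMem hy]; exact zero_le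
  calc ∑' y, A.indicator f y ≤ ∑' y, (↑(box d n) : Set (V d)).indicator
        (fun _ => ENNReal.ofReal c) y := ENNReal.tsum_le_tsum hpt
    _ = ∑ y ∈ box d n, ENNReal.ofReal c := by
        rw [← tsum_subtype (↑(box d n) : Set (V d)) (fun _ => ENNReal.ofReal c)]
        exact Finset.tsum_subtype (box d n) (fun _ => ENNReal.ofReal c)
    _ = ((box d n).card : ℝ≥0∞) * ENNReal.ofReal c := by
        rw [Finset.sum_const, nsmul_eq_mul]
    _ ≤ ENNReal.ofReal ((5*r)^d * c) := by
        rw [← ENNReal.ofReal_natCast, ← ENNReal.ofReal_mul (by positivity)]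
        apply ENNReal.ofReal_le_ofReal
        apply mul_le_mul_of_nonneg_right _ hc
        rw [card_box]
        push_cast
        apply pow_le_pow_left₀ (by positivity)
        have h1 : (n:ℝ) ≤ r + 1 := le_of_lt (Nat.ceil_lt_add_one (by linarith))
        nlinarith

/-- Dyadic location of a real `t ≥ 1`. -/
lemma exists_dyadic {t : ℝ} (ht : 1 ≤ t) : ∃ k : ℕ, 2^k ≤ t ∧ t < 2^(k+1) := by
  obtain ⟨n, hn⟩ := pow_unbounded_of_one_lt t one_lt_two
  have hex : ∃ m : ℕ, t < 2^m := ⟨n, hn⟩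
  classical
  have hm : t < 2^(Nat.find hex) := Nat.find_spec hex
  have hm1 : Nat.find hex ≠ 0 := by
    intro h0; rw [h0] at hm; simp at hm; linarith
  obtain ⟨k, hk⟩ := Nat.exists_eq_succ_of_ne_zero hm1
  refine ⟨k, ?_, by rw [← Nat.succ_eq_add_one, ← hk]; exact hm⟩
  by_contra h
  push_neg at h
  exact Nat.find_min hex (m := k) (by omega) h

/-- Summing a geometric bound. -/
lemma geom_tsum_le {M θ : ℝ} (hM : 0 ≤ M) (hθ0 : 0 ≤ θ) (hθ1 : θ < 1) :
    ∑' k : ℕ, ENNReal.ofReal (M * θ^k) ≤ ENNReal.ofReal (M * (1-θ)⁻¹) := by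
  have : ∀ k : ℕ, ENNReal.ofReal (M * θ^k) = ENNReal.ofReal M * (ENNReal.ofReal θ)^k := by
    intro k
    rw [ENNReal.ofReal_mul hM, ENNReal.ofReal_pow hθ0]
  rw [tsum_congr this, ENNReal.tsum_mul_left, ENNReal.tsum_geometric]
  rw [← ENNReal.ofReal_one, ← ENNReal.ofReal_sub _ hθ0,
    ← ENNReal.ofReal_inv_of_pos (by linarith), ← ENNReal.ofReal_mul hM]

/-! ### Shell identities -/

lemma tail_identity (d : ℕ) (s R : ℝ) (hR : 0 < R) : ∀ k : ℕ,
    (5*(2^(k+1)*R))^d * (2^k*R) ^ (-s) =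
      10^d * R ^ ((d:ℝ) - s) * ((2:ℝ) ^ ((d:ℝ) - s))^k := by
  have hθ : (2:ℝ) ^ ((d:ℝ) - s) = 2^d * 2^(-s) := by
    rw [Real.rpow_sub two_pos, Real.rpow_natCast, Real.rpow_neg two_pos.le, div_eq_mul_inv]
  intro k
  induction k with
  | zero =>
    norm_num
    rw [show (5*(2*R)) = 10*R by ring, mul_pow, Real.rpow_sub hR, Real.rpow_neg hR.le,
      ← Real.rpow_natCast R d]
    ring
  | succ k ih =>
    have e1 : (5*(2^(k+1+1)*R))^d = 2^d * (5*(2^(k+1)*R))^d := by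
      rw [← mul_pow]; congr 1; ring
    have e2 : ((2:ℝ)^(k+1)*R) ^ (-s) = 2^(-s) * ((2:ℝ)^k*R) ^ (-s) := by
      rw [show ((2:ℝ)^(k+1)*R) = 2*((2:ℝ)^k*R) by ring,
        Real.mul_rpow two_pos.le (by positivity)]
    rw [e1, e2]; conv_rhs => rw [pow_succ]
    nth_rewrite 2 [hθ]
    linear_combination (2^d * (2:ℝ)^(-s)) * ih

lemma ball_identity (d : ℕ) (s R : ℝ) (hR : 0 < R) : ∀ k : ℕ,
    (5*(2*R/2^k))^d * (R/2^(k+1)) ^ (-s) =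
      (10^d * 2^s) * R ^ ((d:ℝ) - s) * ((2:ℝ) ^ (s - (d:ℝ)))^k := by
  have hθ : (2:ℝ) ^ (s - (d:ℝ)) = 2^s * ((2:ℝ)^d)⁻¹ := by
    rw [Real.rpow_sub two_pos, Real.rpow_natCast, div_eq_mul_inv]
  intro k
  induction k with
  | zero =>
    norm_num
    rw [show (5*(2*R)) = 10*R by ring, mul_pow, Real.rpow_sub hR,
      Real.div_rpow hR.le two_pos.le, ← Real.rpow_natCast R d, Real.rpow_neg hR.le,
      Real.rpow_neg two_pos.le]
    field_simp
  | succ k ih =>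
    have h2k : (0:ℝ) < 2^k := by positivity
    have e1 : (5*(2*R/2^(k+1)))^d = ((2:ℝ)^d)⁻¹ * (5*(2*R/2^k))^d := by
      rw [← inv_pow, ← mul_pow]; congr 1; rw [pow_succ]; field_simp
    have e2 : (R/(2:ℝ)^(k+1+1)) ^ (-s) = 2^s * (R/(2:ℝ)^(k+1)) ^ (-s) := by
      rw [show R/(2:ℝ)^(k+1+1) = (R/(2:ℝ)^(k+1)) / 2 by rw [pow_succ]; ring,
        Real.div_rpow (by positivity) two_pos.le, Real.rpow_neg two_pos.le,
        div_eq_mul_inv, inv_inv]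
      ring
    rw [e1, e2]; conv_rhs => rw [pow_succ]
    nth_rewrite 2 [hθ]
    linear_combination (2^s * ((2:ℝ)^d)⁻¹) * ih

/-! ### Tail and ball sums -/

lemma tail_sum (s : ℝ) (hs : (d:ℝ) < s) :
    ∃ C : ℝ, 0 ≤ C ∧ ∀ L : ℝ, 1 ≤ L → ∀ R : ℝ, L ≤ R →
      ∑' y : V d, Set.indicator {y : V d | R ≤ bkt L y}
          (fun y => ENNReal.ofReal (bkt L y ^ (-s))) y
        ≤ ENNReal.ofReal (C * R ^ ((d:ℝ) - s)) := by
  set θ : ℝ := (2:ℝ) ^ ((d:ℝ) - s) with hθdef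
  have hθ0 : 0 < θ := Real.rpow_pos_of_pos two_pos _
  have hθ1 : θ < 1 := Real.rpow_lt_one_of_one_lt_of_neg one_lt_two (by linarith)
  refine ⟨10^d * (1-θ)⁻¹, mul_nonneg (by positivity) (inv_nonneg.2 (by linarith)), ?_⟩
  intro L hL R hR
  have hR1 : (1:ℝ) ≤ R := le_trans hL hR
  have hR0 : (0:ℝ) < R := lt_of_lt_of_le one_pos hR1
  set f : V d → ℝ≥0∞ := fun y => ENNReal.ofReal (bkt L y ^ (-s)) with hf
  set shell : ℕ → Set (V d) :=
    fun k => {y | 2^k * R ≤ bkt L y ∧ bkt L y ≤ 2^(k+1) * R} with hshell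
  have hcov : ∀ y, Set.indicator {y : V d | R ≤ bkt L y} f y
      ≤ ∑' k, (shell k).indicator f y := by
    intro y
    by_cases hy : y ∈ {y : V d | R ≤ bkt L y}
    · rw [Set.indicator_of_mem hy]
      obtain ⟨k, hk1, hk2⟩ := exists_dyadic ((one_le_div hR0).2 hy)
      have hmem : y ∈ shell k := ⟨(le_div_iff₀ hR0).1 hk1,
        le_of_lt ((div_lt_iff₀ hR0).1 hk2)⟩
      calc f y = (shell k).indicator f y := (Set.indicator_of_mem hmem f).symm
        _ ≤ _ := ENNReal.le_tsum k
    · rw [Set.indicator_of_notMem hy]; exact zero_le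
  calc ∑' y, Set.indicator {y : V d | R ≤ bkt L y} f y
      ≤ ∑' y, ∑' k, (shell k).indicator f y := ENNReal.tsum_le_tsum hcov
    _ = ∑' k, ∑' y, (shell k).indicator f y := ENNReal.tsum_comm
    _ ≤ ∑' k : ℕ, ENNReal.ofReal ((10^d * R^((d:ℝ)-s)) * θ^k) := by
        apply ENNReal.tsum_le_tsum
        intro k
        have h2k : (0:ℝ) < 2^k := by positivity
        have hb := tsum_indicator_le_of_ball (shell k) f
          (c := (2^k*R) ^ (-s)) (r := 2^(k+1)*R)
          (Real.rpow_nonneg (by positivity) _)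
          (by nlinarith [one_le_pow₀ (n := k+1) (by norm_num : (1:ℝ) ≤ 2)])
          (fun y hy => ENNReal.ofReal_le_ofReal
            (Real.rpow_le_rpow_of_nonpos (by positivity) hy.1
              (by have hd0 : (0:ℝ) ≤ d := Nat.cast_nonneg d; linarith)))
          (fun y hy => le_trans (nrm_le_bkt L y) hy.2)
        refine le_trans hb (le_of_eq ?_)
        congr 1
        exact tail_identity d s R hR0 k
    _ ≤ ENNReal.ofReal ((10^d * R^((d:ℝ)-s)) * (1-θ)⁻¹) :=
        geom_tsum_le (by positivity) hθ0.le hθ1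
    _ = ENNReal.ofReal (10^d * (1-θ)⁻¹ * R^((d:ℝ)-s)) := by ring_nf

lemma ball_sum (s : ℝ) (hs0 : 0 ≤ s) (hs : s < (d:ℝ)) :
    ∃ C : ℝ, 0 ≤ C ∧ ∀ L : ℝ, 1 ≤ L → ∀ R : ℝ, L ≤ R →
      ∑' y : V d, Set.indicator {y : V d | bkt L y ≤ R}
          (fun y => ENNReal.ofReal (bkt L y ^ (-s))) y
        ≤ ENNReal.ofReal (C * R ^ ((d:ℝ) - s)) := by
  set θ : ℝ := (2:ℝ) ^ (s - (d:ℝ)) with hθdef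
  have hθ0 : 0 < θ := Real.rpow_pos_of_pos two_pos _
  have hθ1 : θ < 1 := Real.rpow_lt_one_of_one_lt_of_neg one_lt_two (by linarith)
  refine ⟨(10^d * 2^s) * (1-θ)⁻¹, mul_nonneg (by positivity) (inv_nonneg.2 (by linarith)), ?_⟩
  intro L hL R hR
  have hR1 : (1:ℝ) ≤ R := le_trans hL hR
  have hR0 : (0:ℝ) < R := lt_of_lt_of_le one_pos hR1
  set f : V d → ℝ≥0∞ := fun y => ENNReal.ofReal (bkt L y ^ (-s)) with hf
  set shell : ℕ → Set (V d) :=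
    fun k => {y | R ≤ 2^(k+1) * bkt L y ∧ 2^k * bkt L y ≤ 2*R} with hshell
  have hcov : ∀ y, Set.indicator {y : V d | bkt L y ≤ R} f y
      ≤ ∑' k, (shell k).indicator f y := by
    intro y
    have hby : 0 < bkt L y := bkt_pos hL y
    by_cases hy : y ∈ {y : V d | bkt L y ≤ R}
    · rw [Set.indicator_of_mem hy]
      obtain ⟨k, hk1, hk2⟩ := exists_dyadic ((one_le_div hby).2 hy)
      have hmem : y ∈ shell k := by
        constructor
        · have := le_of_lt ((div_lt_iff₀ hby).1 hk2)
          linarith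
        · have := (le_div_iff₀ hby).1 hk1
          linarith
      calc f y = (shell k).indicator f y := (Set.indicator_of_mem hmem f).symm
        _ ≤ _ := ENNReal.le_tsum k
    · rw [Set.indicator_of_notMem hy]; exact zero_le
  calc ∑' y, Set.indicator {y : V d | bkt L y ≤ R} f y
      ≤ ∑' y, ∑' k, (shell k).indicator f y := ENNReal.tsum_le_tsum hcov
    _ = ∑' k, ∑' y, (shell k).indicator f y := ENNReal.tsum_comm
    _ ≤ ∑' k : ℕ, ENNReal.ofReal (((10^d * 2^s) * R^((d:ℝ)-s)) * θ^k) := by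
        apply ENNReal.tsum_le_tsum
        intro k
        have h2k : (0:ℝ) < 2^k := by positivity
        by_cases hne : ((2:ℝ)^k ≤ 2*R)
        · have hb := tsum_indicator_le_of_ball (shell k) f
            (c := (R/2^(k+1)) ^ (-s)) (r := 2*R/2^k)
            (Real.rpow_nonneg (by positivity) _)
            (by rw [le_div_iff₀ h2k]; linarith)
            (fun y hy => ENNReal.ofReal_le_ofReal
              (Real.rpow_le_rpow_of_nonpos (by positivity)
                (by rw [div_le_iff₀ (by positivity)]
                    have := hy.1
                    nlinarith [bkt_pos hL y])
                (by linarith)))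
            (fun y hy => le_trans (nrm_le_bkt L y)
              (by rw [le_div_iff₀ h2k]; linarith [hy.2]))
          refine le_trans hb (le_of_eq ?_)
          congr 1
          exact ball_identity d s R hR0 k
        · have hempty : shell k = ∅ := by
            ext y
            simp only [Set.mem_empty_iff_false, iff_false, hshell, Set.mem_setOf_eq]
            rintro ⟨h1, h2⟩
            have hby : 1 ≤ bkt L y := le_trans hL (le_bkt L y)
            push_neg at hne
            nlinarith
          rw [hempty]
          simp only [Set.indicator_empty, tsum_zero]
          exact zero_le
    _ ≤ ENNReal.ofReal (((10^d * 2^s) * R^((d:ℝ)-s)) * (1-θ)⁻¹) :=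
        geom_tsum_le (by positivity) hθ0.le hθ1
    _ = ENNReal.ofReal ((10^d * 2^s) * (1-θ)⁻¹ * R^((d:ℝ)-s)) := by ring_nf

/-! ### Pointwise bounds -/

lemma nrm_neg (x : V d) : nrm (-x) = nrm x := by
  rw [nrm, nrm]
  congr 1
  apply Finset.sum_congr rfl
  intro i _
  rw [show ((-x) i : ℝ) = -((x i : ℤ) : ℝ) by push_cast [Pi.neg_apply]; ring]
  ring

lemma nrm_sub_comm (x y : V d) : nrm (x - y) = nrm (y - x) := by
  rw [show x - y = -(y - x) by ring, nrm_neg]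

lemma half_rpow {w : ℝ} (hw : 0 < w) (t : ℝ) : (w/2) ^ (-t) = 2^t * w^(-t) := by
  rw [Real.div_rpow hw.le two_pos.le, Real.rpow_neg hw.le, Real.rpow_neg two_pos.le,
    div_eq_mul_inv, inv_inv]
  ring

lemma half_bkt_bound {L a b : ℝ} (hL : 1 ≤ L) (hba : b ≤ a) (hb : 0 < b) (x y : V d) :
    bkt L (x-y) ^ (-a) * bkt L y ^ (-b) ≤
      2^a * bkt L x ^ (-b) * (bkt L (x-y) ^ (-a) + bkt L y ^ (-a)) := by
  have ha : 0 < a := lt_of_lt_of_le hb hba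
  set u := bkt L (x-y) with hu'
  set v := bkt L y with hv'
  set w := bkt L x with hw'
  have hu : 0 < u := bkt_pos hL _
  have hv : 0 < v := bkt_pos hL _
  have hw : 0 < w := bkt_pos hL _
  have huv : w ≤ u + v := bkt_triangle L x y
  have hua : (0:ℝ) ≤ u ^ (-a) := Real.rpow_nonneg hu.le _
  have hva : (0:ℝ) ≤ v ^ (-a) := Real.rpow_nonneg hv.le _
  have hwb : (0:ℝ) ≤ w ^ (-b) := Real.rpow_nonneg hw.le _
  have h2a : (0:ℝ) ≤ 2^a := Real.rpow_nonneg two_pos.le _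
  by_cases hcase : w/2 ≤ v
  · have h1 : v ^ (-b) ≤ 2^b * w^(-b) := by
      rw [← half_rpow hw]
      exact Real.rpow_le_rpow_of_nonpos (by positivity) hcase (by linarith)
    have h2 : (2:ℝ)^b ≤ 2^a := Real.rpow_le_rpow_of_exponent_le one_le_two hba
    calc u ^ (-a) * v ^ (-b) ≤ u ^ (-a) * (2^a * w^(-b)) := by
          apply mul_le_mul_of_nonneg_left _ hua
          exact h1.trans (mul_le_mul_of_nonneg_right h2 hwb)
      _ = 2^a * w^(-b) * u^(-a) := by ring
      _ ≤ 2^a * w^(-b) * (u^(-a) + v^(-a)) := by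
          apply mul_le_mul_of_nonneg_left (by linarith) (by positivity)
  · push_neg at hcase
    have hucase : w/2 ≤ u := by linarith
    have h1 : u ^ (-a) ≤ 2^a * w^(-a) := by
      rw [← half_rpow hw]
      exact Real.rpow_le_rpow_of_nonpos (by positivity) hucase (by linarith)
    have h2 : w^(-a) = w^(-b) * w^(b-a) := by
      rw [← Real.rpow_add hw]; congr 1; ring
    have h3 : w^(b-a) ≤ v^(b-a) := by
      apply Real.rpow_le_rpow_of_nonpos hv (by linarith) (by linarith)
    have h4 : v^(b-a) * v^(-b) = v^(-a) := by
      rw [← Real.rpow_add hv]; congr 1; ring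
    have hvb : (0:ℝ) ≤ v ^ (-b) := Real.rpow_nonneg hv.le _
    calc u ^ (-a) * v ^ (-b) ≤ (2^a * w^(-a)) * v ^ (-b) :=
          mul_le_mul_of_nonneg_right h1 hvb
      _ = 2^a * w^(-b) * (w^(b-a) * v^(-b)) := by rw [h2]; ring
      _ ≤ 2^a * w^(-b) * (v^(b-a) * v^(-b)) := by
          apply mul_le_mul_of_nonneg_left (mul_le_mul_of_nonneg_right h3 hvb) (by positivity)
      _ = 2^a * w^(-b) * v^(-a) := by rw [h4]
      _ ≤ 2^a * w^(-b) * (u^(-a) + v^(-a)) := by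
          apply mul_le_mul_of_nonneg_left (by linarith) (by positivity)

lemma whole_space_sum (s : ℝ) (hs : (d:ℝ) < s) :
    ∃ C : ℝ, 0 ≤ C ∧ ∀ L : ℝ, 1 ≤ L →
      (∑' y : V d, ENNReal.ofReal (bkt L y ^ (-s))) ≤ ENNReal.ofReal (C * L ^ ((d:ℝ) - s)) := by
  obtain ⟨C, hC0, hC⟩ := tail_sum (d := d) s hs
  refine ⟨C, hC0, fun L hL => ?_⟩
  refine le_trans (le_of_eq ?_) (hC L hL L le_rfl)
  exact tsum_congr fun y =>
    (Set.indicator_of_mem (show y ∈ {y : V d | L ≤ bkt L y} from le_bkt L y)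
      (fun y => ENNReal.ofReal (bkt L y ^ (-s)))).symm

/-! ### The main theorem -/

theorem statement13 (d : ℕ) (hd : 1 ≤ d) (a b : ℝ) (hba : b ≤ a) (hb : 0 < b)
    (hab : (d : ℝ) < a + b) :
    ∃ C : ℝ, 0 ≤ C ∧ ∀ L : ℝ, 1 ≤ L → ∀ x : V d,
      ((d : ℝ) < a →
        (∑' y : V d, ENNReal.ofReal (bkt L (x - y) ^ (-a) * bkt L y ^ (-b))) ≤
          ENNReal.ofReal (C * L ^ ((d : ℝ) - a) * bkt L x ^ (-b))) ∧
      (a < (d : ℝ) →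
        (∑' y : V d, ENNReal.ofReal (bkt L (x - y) ^ (-a) * bkt L y ^ (-b))) ≤
          ENNReal.ofReal (C * bkt L x ^ ((d : ℝ) - a - b))) := by
  have ha : 0 < a := lt_of_lt_of_le hb hba
  rcases lt_trichotomy ((d:ℕ):ℝ) a with hda | hda | hda
  · -- case d < a
    obtain ⟨C1, hC10, hC1⟩ := whole_space_sum (d := d) a hda
    refine ⟨2 * 2^a * C1 + 1, by positivity, ?_⟩
    intro L hL x
    refine ⟨fun _ => ?_, fun h => absurd (lt_trans hda h) (lt_irrefl _)⟩
    have hw : 0 < bkt L x := bkt_pos hL x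
    have hwb : (0:ℝ) ≤ bkt L x ^ (-b) := Real.rpow_nonneg hw.le _
    have hLd : (0:ℝ) ≤ L ^ ((d:ℝ) - a) := Real.rpow_nonneg (by linarith) _
    have hsub : (∑' y : V d, ENNReal.ofReal (bkt L (x - y) ^ (-a)))
        = ∑' z : V d, ENNReal.ofReal (bkt L z ^ (-a)) := by
      have := (Equiv.subLeft x).tsum_eq (fun z : V d => ENNReal.ofReal (bkt L z ^ (-a)))
      exact this
    calc ∑' y : V d, ENNReal.ofReal (bkt L (x - y) ^ (-a) * bkt L y ^ (-b))
        ≤ ∑' y : V d, ENNReal.ofReal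
            (2^a * bkt L x ^ (-b) * (bkt L (x-y) ^ (-a) + bkt L y ^ (-a))) :=
          ENNReal.tsum_le_tsum fun y =>
            ENNReal.ofReal_le_ofReal (half_bkt_bound hL hba hb x y)
      _ = ENNReal.ofReal (2^a * bkt L x ^ (-b)) *
            ∑' y : V d, (ENNReal.ofReal (bkt L (x-y) ^ (-a))
              + ENNReal.ofReal (bkt L y ^ (-a))) := by
          rw [← ENNReal.tsum_mul_left]
          apply tsum_congr
          intro y
          rw [← ENNReal.ofReal_add (Real.rpow_nonneg (bkt_pos hL _).le _)
              (Real.rpow_nonneg (bkt_pos hL _).le _),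
            ← ENNReal.ofReal_mul (by positivity)]
      _ = ENNReal.ofReal (2^a * bkt L x ^ (-b)) *
            ((∑' y : V d, ENNReal.ofReal (bkt L (x-y) ^ (-a)))
              + ∑' y : V d, ENNReal.ofReal (bkt L y ^ (-a))) := by
          rw [ENNReal.tsum_add]
      _ ≤ ENNReal.ofReal (2^a * bkt L x ^ (-b)) *
            (ENNReal.ofReal (C1 * L ^ ((d:ℝ) - a)) + ENNReal.ofReal (C1 * L ^ ((d:ℝ) - a))) := by
          apply mul_le_mul_right
          apply add_le_add
          · rw [hsub]; exact hC1 L hL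
          · exact hC1 L hL
      _ = ENNReal.ofReal (2^a * bkt L x ^ (-b) * (2 * (C1 * L ^ ((d:ℝ) - a)))) := by
          rw [← ENNReal.ofReal_add (by positivity) (by positivity),
            ← ENNReal.ofReal_mul (by positivity)]
          congr 1
          ring
      _ ≤ ENNReal.ofReal ((2 * 2^a * C1 + 1) * L ^ ((d:ℝ) - a) * bkt L x ^ (-b)) := by
          apply ENNReal.ofReal_le_ofReal
          have h2a : (0:ℝ) ≤ 2^a := Real.rpow_nonneg two_pos.le _
          nlinarith [mul_nonneg hLd hwb, mul_nonneg (mul_nonneg h2a hLd) hwb]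
  · -- case a = d
    refine ⟨0, le_rfl, fun L hL x => ⟨fun h => absurd h (by rw [hda]; exact lt_irrefl _),
      fun h => absurd h (by rw [hda]; exact lt_irrefl _)⟩⟩
  · -- case a < d
    obtain ⟨Ct, hCt0, hCt⟩ := tail_sum (d := d) (a+b) hab
    obtain ⟨Ca, hCa0, hCa⟩ := ball_sum (d := d) a ha.le hda
    obtain ⟨Cb, hCb0, hCb⟩ := ball_sum (d := d) b hb.le (lt_of_le_of_lt hba hda)
    refine ⟨2^a * Ct + 2^b * Ca * 3^((d:ℝ)) + 2^a * Cb, by positivity, ?_⟩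
    intro L hL x
    refine ⟨fun h => absurd (lt_trans h hda) (lt_irrefl _), fun _ => ?_⟩
    set w := bkt L x with hwdef
    have hw : 0 < w := bkt_pos hL x
    have hLw : L ≤ w := le_bkt L x
    have h1w : (1:ℝ) ≤ w := le_trans hL hLw
    set F : V d → ℝ≥0∞ := Set.indicator {z : V d | bkt L z ≤ 3*w}
        (fun z => ENNReal.ofReal (bkt L z ^ (-a))) with hF
    set G1 : V d → ℝ≥0∞ := fun y => ENNReal.ofReal ((2:ℝ)^a) *
        Set.indicator {y : V d | 2*w ≤ bkt L y}
          (fun y => ENNReal.ofReal (bkt L y ^ (-(a+b)))) y with hG1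
    set G2 : V d → ℝ≥0∞ := fun y => ENNReal.ofReal (2^b * w^(-b)) * F (x - y) with hG2
    set G3 : V d → ℝ≥0∞ := fun y => ENNReal.ofReal (2^a * w^(-a)) *
        Set.indicator {y : V d | bkt L y ≤ w}
          (fun y => ENNReal.ofReal (bkt L y ^ (-b))) y with hG3
    have hpt : ∀ y : V d, ENNReal.ofReal (bkt L (x - y) ^ (-a) * bkt L y ^ (-b))
        ≤ G1 y + G2 y + G3 y := by
      intro y
      have hu : 0 < bkt L (x - y) := bkt_pos hL _
      have hv : 0 < bkt L y := bkt_pos hL _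
      have huv : w ≤ bkt L (x - y) + bkt L y := bkt_triangle L x y
      have hua : (0:ℝ) ≤ bkt L (x - y) ^ (-a) := Real.rpow_nonneg hu.le _
      have hvb : (0:ℝ) ≤ bkt L y ^ (-b) := Real.rpow_nonneg hv.le _
      have hnx : nrm x ≤ w := nrm_le_bkt L x
      have hny : nrm y ≤ bkt L y := nrm_le_bkt L y
      by_cases hc1 : 2*w ≤ bkt L y
      · -- far region: G1 dominates
        have hvnrm : bkt L y = nrm y := by
          have hLv : L < bkt L y := by linarith
          rcases le_total (nrm y) L with h' | h'
          · exfalso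
            have : bkt L y = L := max_eq_right h'
            linarith
          · exact max_eq_left h'
        have hxy : bkt L y / 2 ≤ nrm (x - y) := by
          have t := nrm_triangle y x
          rw [← nrm_sub_comm x y] at t
          rw [← hvnrm] at t
          linarith
        have huv2 : bkt L y / 2 ≤ bkt L (x - y) := le_trans hxy (nrm_le_bkt L _)
        have h1 : bkt L (x - y) ^ (-a) ≤ 2^a * bkt L y ^ (-a) := by
          rw [← half_rpow hv]
          exact Real.rpow_le_rpow_of_nonpos (by positivity) huv2 (by linarith)
        have hbd : bkt L (x - y) ^ (-a) * bkt L y ^ (-b) ≤ 2^a * bkt L y ^ (-(a+b)) := by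
          calc bkt L (x - y) ^ (-a) * bkt L y ^ (-b)
              ≤ (2^a * bkt L y ^ (-a)) * bkt L y ^ (-b) :=
                mul_le_mul_of_nonneg_right h1 hvb
            _ = 2^a * (bkt L y ^ (-a) * bkt L y ^ (-b)) := by ring
            _ = 2^a * bkt L y ^ (-(a+b)) := by
                rw [← Real.rpow_add hv]; congr 2; ring
        calc ENNReal.ofReal (bkt L (x - y) ^ (-a) * bkt L y ^ (-b))
            ≤ ENNReal.ofReal (2^a * bkt L y ^ (-(a+b))) := ENNReal.ofReal_le_ofReal hbd
          _ = G1 y := by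
              show _ = ENNReal.ofReal ((2:ℝ)^a) * Set.indicator {y : V d | 2*w ≤ bkt L y}
                (fun y => ENNReal.ofReal (bkt L y ^ (-(a+b)))) y
              rw [Set.indicator_of_mem (show y ∈ {y : V d | 2*w ≤ bkt L y} from hc1),
                ← ENNReal.ofReal_mul (Real.rpow_nonneg two_pos.le _)]
          _ ≤ G1 y + G2 y + G3 y := le_trans le_self_add le_self_add
      · by_cases hc2 : w/2 ≤ bkt L y
        · -- middle region: G2 dominates
          push_neg at hc1
          have hu3 : bkt L (x - y) ≤ 3*w := by
            have t := nrm_triangle (x - y) (-y)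
            have e : (x - y) - (-y) = x := by abel
            rw [e, nrm_neg] at t
            have : nrm (x - y) ≤ 3*w := by linarith
            exact max_le this (by linarith)
          have h1 : bkt L y ^ (-b) ≤ 2^b * w^(-b) := by
            rw [← half_rpow hw]
            exact Real.rpow_le_rpow_of_nonpos (by positivity) hc2 (by linarith)
          have hbd : bkt L (x - y) ^ (-a) * bkt L y ^ (-b)
              ≤ 2^b * w^(-b) * bkt L (x - y) ^ (-a) := by
            calc bkt L (x - y) ^ (-a) * bkt L y ^ (-b)
                ≤ bkt L (x - y) ^ (-a) * (2^b * w^(-b)) :=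
                  mul_le_mul_of_nonneg_left h1 hua
              _ = 2^b * w^(-b) * bkt L (x - y) ^ (-a) := by ring
          calc ENNReal.ofReal (bkt L (x - y) ^ (-a) * bkt L y ^ (-b))
              ≤ ENNReal.ofReal (2^b * w^(-b) * bkt L (x - y) ^ (-a)) :=
                ENNReal.ofReal_le_ofReal hbd
            _ = G2 y := by
                show _ = ENNReal.ofReal (2^b * w^(-b)) * Set.indicator {z : V d | bkt L z ≤ 3*w}
                  (fun z => ENNReal.ofReal (bkt L z ^ (-a))) (x - y)
                rw [Set.indicator_of_mem (show x - y ∈ {z : V d | bkt L z ≤ 3*w} from hu3),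
                  ← ENNReal.ofReal_mul (by positivity)]
            _ ≤ G1 y + G2 y + G3 y := le_trans le_add_self le_self_add
        · -- near region: G3 dominates
          push_neg at hc2
          have hu2 : w/2 ≤ bkt L (x - y) := by linarith
          have h1 : bkt L (x - y) ^ (-a) ≤ 2^a * w^(-a) := by
            rw [← half_rpow hw]
            exact Real.rpow_le_rpow_of_nonpos (by positivity) hu2 (by linarith)
          have hbd : bkt L (x - y) ^ (-a) * bkt L y ^ (-b)
              ≤ 2^a * w^(-a) * bkt L y ^ (-b) :=
            mul_le_mul_of_nonneg_right h1 hvb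
          calc ENNReal.ofReal (bkt L (x - y) ^ (-a) * bkt L y ^ (-b))
              ≤ ENNReal.ofReal (2^a * w^(-a) * bkt L y ^ (-b)) :=
                ENNReal.ofReal_le_ofReal hbd
            _ = G3 y := by
                show _ = ENNReal.ofReal (2^a * w^(-a)) * Set.indicator {y : V d | bkt L y ≤ w}
                  (fun y => ENNReal.ofReal (bkt L y ^ (-b))) y
                rw [Set.indicator_of_mem
                  (show y ∈ {y : V d | bkt L y ≤ w} from
                    le_of_lt (show bkt L y < w by linarith)),
                  ← ENNReal.ofReal_mul (by positivity)]
            _ ≤ G1 y + G2 y + G3 y := le_add_self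
    have hwexp : (0:ℝ) ≤ w ^ ((d:ℝ) - a - b) := Real.rpow_nonneg hw.le _
    have bound1 : ∑' y : V d, G1 y ≤ ENNReal.ofReal (2^a * Ct * w ^ ((d:ℝ) - a - b)) := by
      rw [hG1, ENNReal.tsum_mul_left]
      have ht := hCt L hL (2*w) (by linarith)
      calc ENNReal.ofReal ((2:ℝ)^a) * ∑' y : V d, Set.indicator {y : V d | 2*w ≤ bkt L y}
            (fun y => ENNReal.ofReal (bkt L y ^ (-(a+b)))) y
          ≤ ENNReal.ofReal ((2:ℝ)^a) * ENNReal.ofReal (Ct * (2*w) ^ ((d:ℝ) - (a+b))) :=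
            mul_le_mul_right ht _
        _ ≤ ENNReal.ofReal (2^a * Ct * w ^ ((d:ℝ) - a - b)) := by
            rw [← ENNReal.ofReal_mul (Real.rpow_nonneg two_pos.le _)]
            apply ENNReal.ofReal_le_ofReal
            have e1 : (2*w) ^ ((d:ℝ) - (a+b)) ≤ w ^ ((d:ℝ) - (a+b)) :=
              Real.rpow_le_rpow_of_nonpos hw (by linarith) (by linarith)
            have e2 : ((d:ℝ) - (a+b)) = (d:ℝ) - a - b := by ring
            rw [e2] at e1
            have h2a : (0:ℝ) ≤ (2:ℝ)^a := Real.rpow_nonneg two_pos.le _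
            calc (2:ℝ)^a * (Ct * (2*w) ^ ((d:ℝ) - (a+b)))
                = (2:ℝ)^a * Ct * (2*w) ^ ((d:ℝ) - (a+b)) := by ring
              _ = (2:ℝ)^a * Ct * (2*w) ^ ((d:ℝ) - a - b) := by rw [e2]
              _ ≤ 2^a * Ct * w ^ ((d:ℝ) - a - b) := by
                  apply mul_le_mul_of_nonneg_left _ (by positivity)
                  rw [← e2] at e1 ⊢
                  exact Real.rpow_le_rpow_of_nonpos hw (by linarith) (by linarith)
    have bound2 : ∑' y : V d, G2 y
        ≤ ENNReal.ofReal (2^b * Ca * 3^((d:ℝ)) * w ^ ((d:ℝ) - a - b)) := by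
      rw [hG2, ENNReal.tsum_mul_left]
      have hFsum : (∑' y : V d, F (x - y)) = ∑' z : V d, F z := (Equiv.subLeft x).tsum_eq F
      rw [hFsum, hF]
      have ht := hCa L hL (3*w) (by linarith)
      calc ENNReal.ofReal (2^b * w^(-b)) * ∑' z : V d, Set.indicator {z : V d | bkt L z ≤ 3*w}
            (fun z => ENNReal.ofReal (bkt L z ^ (-a))) z
          ≤ ENNReal.ofReal (2^b * w^(-b)) * ENNReal.ofReal (Ca * (3*w) ^ ((d:ℝ) - a)) :=
            mul_le_mul_right ht _
        _ ≤ ENNReal.ofReal (2^b * Ca * 3^((d:ℝ)) * w ^ ((d:ℝ) - a - b)) := by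
            rw [← ENNReal.ofReal_mul (by positivity)]
            apply ENNReal.ofReal_le_ofReal
            have e1 : (3*w) ^ ((d:ℝ) - a) = 3^((d:ℝ) - a) * w ^ ((d:ℝ) - a) :=
              Real.mul_rpow (by norm_num) hw.le
            have e2 : (3:ℝ)^((d:ℝ) - a) ≤ 3^((d:ℝ)) :=
              Real.rpow_le_rpow_of_exponent_le (by norm_num) (by linarith)
            have e3 : w^(-b) * w^((d:ℝ) - a) = w^((d:ℝ) - a - b) := by
              rw [← Real.rpow_add hw]; congr 1; ring
            have h3 : (0:ℝ) ≤ 3^((d:ℝ) - a) := Real.rpow_nonneg (by norm_num) _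
            calc 2^b * w^(-b) * (Ca * (3*w) ^ ((d:ℝ) - a))
                = (2^b * Ca) * (3^((d:ℝ) - a) * (w^(-b) * w^((d:ℝ) - a))) := by
                  rw [e1]; ring
              _ = (2^b * Ca) * (3^((d:ℝ) - a) * w^((d:ℝ) - a - b)) := by rw [e3]
              _ ≤ (2^b * Ca) * (3^((d:ℝ)) * w^((d:ℝ) - a - b)) := by
                  apply mul_le_mul_of_nonneg_left _ (by positivity)
                  exact mul_le_mul_of_nonneg_right e2 hwexp
              _ = 2^b * Ca * 3^((d:ℝ)) * w ^ ((d:ℝ) - a - b) := by ring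
    have bound3 : ∑' y : V d, G3 y ≤ ENNReal.ofReal (2^a * Cb * w ^ ((d:ℝ) - a - b)) := by
      rw [hG3, ENNReal.tsum_mul_left]
      have ht := hCb L hL w hLw
      calc ENNReal.ofReal (2^a * w^(-a)) * ∑' y : V d, Set.indicator {y : V d | bkt L y ≤ w}
            (fun y => ENNReal.ofReal (bkt L y ^ (-b))) y
          ≤ ENNReal.ofReal (2^a * w^(-a)) * ENNReal.ofReal (Cb * w ^ ((d:ℝ) - b)) :=
            mul_le_mul_right ht _
        _ ≤ ENNReal.ofReal (2^a * Cb * w ^ ((d:ℝ) - a - b)) := by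
            rw [← ENNReal.ofReal_mul (by positivity)]
            apply ENNReal.ofReal_le_ofReal
            have e3 : w^(-a) * w^((d:ℝ) - b) = w^((d:ℝ) - a - b) := by
              rw [← Real.rpow_add hw]; congr 1; ring
            exact le_of_eq (by rw [← e3]; ring)
    calc ∑' y : V d, ENNReal.ofReal (bkt L (x - y) ^ (-a) * bkt L y ^ (-b))
        ≤ ∑' y : V d, (G1 y + G2 y + G3 y) := ENNReal.tsum_le_tsum hpt
      _ = (∑' y : V d, G1 y) + (∑' y : V d, G2 y) + ∑' y : V d, G3 y := by
          rw [ENNReal.tsum_add, ENNReal.tsum_add]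
      _ ≤ ENNReal.ofReal (2^a * Ct * w ^ ((d:ℝ) - a - b))
            + ENNReal.ofReal (2^b * Ca * 3^((d:ℝ)) * w ^ ((d:ℝ) - a - b))
            + ENNReal.ofReal (2^a * Cb * w ^ ((d:ℝ) - a - b)) :=
          add_le_add (add_le_add bound1 bound2) bound3
      _ = ENNReal.ofReal ((2^a * Ct + 2^b * Ca * 3^((d:ℝ)) + 2^a * Cb)
            * w ^ ((d:ℝ) - a - b)) := by
          rw [← ENNReal.ofReal_add (by positivity) (by positivity),
            ← ENNReal.ofReal_add (by positivity) (by positivity)]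
          congr 1
          ring


end LongRange
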